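/- Let n ≥ 2, a > 0, and let f : ℝ → ℂ be infinitely differentiable on (-a, a) and satisfy f⁽ⁿ⁾(x) + b_{n-1}(x)·f⁽ⁿ⁻¹⁾(x) + ⋯ + b_0(x)·f(x) = 0 for all x ∈ (-a, a) \ {0}, where b_k : ℝ → ℂ. Assume f(0) = f'(0) = ⋯ = f⁽ⁿ⁻¹⁾(0) = 0, and assume that for each k = 0, 1, …, n-1, |x|^{n-k}·|b_k(x)| → 0 as x → 0 (i.e., |b_k(x)| = o(1/|x|^{n-k})). Then there exists δ > 0 such that f ≡ 0 on [-δ, δ]. -/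

import Mathlib

open Filter Topology

lemma keyA (n : ℕ) (a δ : ℝ) (hδ : 0 < δ) (hsub : Set.Icc (-δ) δ ⊆ Set.Ioo (-a) a)
    (f : ℝ → ℂ)
    (hsmooth : ∀ k : ℕ, ∀ x ∈ Set.Ioo (-a) a, DifferentiableAt ℝ (iteratedDeriv k f) x)
    (hinit : ∀ k < n, iteratedDeriv k f 0 = 0)
    (M : ℝ) (hM : ∀ x ∈ Set.Icc (-δ) δ, ‖iteratedDeriv n f x‖ ≤ M) :
    ∀ m k, k + m = n → ∀ x ∈ Set.Icc (-δ) δ, ‖iteratedDeriv k f x‖ ≤ M * |x| ^ m := by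
  intro m
  induction m with
  | zero => intro k hk x hx; subst hk; simpa using hM x hx
  | succ m ih =>
    intro k hk x hx
    have hkn : k < n := by omega
    have ih' := ih (k + 1) (by omega)
    have h0 : (0 : ℝ) ∈ Set.Icc (-δ) δ := by constructor <;> linarith
    have htx : ∀ t ∈ Set.uIcc (0:ℝ) x, |t| ≤ |x| := by
      intro t ht
      rcases le_total (0:ℝ) x with h | h
      · rw [Set.uIcc_of_le h, Set.mem_Icc] at ht
        rw [abs_of_nonneg ht.1, abs_of_nonneg h]; exact ht.2
      · rw [Set.uIcc_of_ge h, Set.mem_Icc] at ht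
        rw [abs_of_nonpos ht.2, abs_of_nonpos h]; linarith [ht.1]
    have hsubI : Set.uIcc (0:ℝ) x ⊆ Set.Icc (-δ) δ :=
      Set.ordConnected_Icc.uIcc_subset h0 hx
    have hder : ∀ t ∈ Set.uIcc (0:ℝ) x,
        HasDerivWithinAt (iteratedDeriv k f) (iteratedDeriv (k+1) f t) (Set.uIcc (0:ℝ) x) t := by
      intro t ht
      have hd := (hsmooth k t (hsub (hsubI ht))).hasDerivAt
      rw [show iteratedDeriv (k+1) f t = deriv (iteratedDeriv k f) t from by
        rw [iteratedDeriv_succ]]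
      exact hd.hasDerivWithinAt
    have hMnn : 0 ≤ M := le_trans (norm_nonneg _) (hM 0 h0)
    have hbound : ∀ t ∈ Set.uIcc (0:ℝ) x, ‖iteratedDeriv (k+1) f t‖ ≤ M * |x| ^ m := by
      intro t ht
      calc ‖iteratedDeriv (k+1) f t‖ ≤ M * |t| ^ m := ih' t (hsubI ht)
        _ ≤ M * |x| ^ m :=
            mul_le_mul_of_nonneg_left (pow_le_pow_left₀ (abs_nonneg t) (htx t ht) m) hMnn
    have := Convex.norm_image_sub_le_of_norm_hasDerivWithin_le hder hbound
      (convex_uIcc _ _) (Set.left_mem_uIcc) (Set.right_mem_uIcc)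
    rw [hinit k hkn, sub_zero, sub_zero, Real.norm_eq_abs] at this
    calc ‖iteratedDeriv k f x‖ ≤ M * |x| ^ m * |x| := this
      _ = M * |x| ^ (m + 1) := by ring

/-- Corollary 2 (Pan–Wang): uniqueness when `|b_k(x)| = o(1/|x|^(n-k))` as `x → 0`. -/
theorem uniqueness_littleO
    (n : ℕ) (hn : 2 ≤ n) (a : ℝ) (ha : 0 < a)
    (f : ℝ → ℂ) (b : ℕ → ℝ → ℂ)
    (hsmooth : ∀ k : ℕ, ∀ x ∈ Set.Ioo (-a) a, DifferentiableAt ℝ (iteratedDeriv k f) x)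
    (hode : ∀ x ∈ Set.Ioo (-a) a, x ≠ 0 →
      iteratedDeriv n f x + ∑ k ∈ Finset.range n, b k x * iteratedDeriv k f x = 0)
    (hinit : ∀ k < n, iteratedDeriv k f 0 = 0)
    (hcoeff : ∀ k < n,
      Filter.Tendsto (fun x : ℝ => |x| ^ (n - k) * ‖b k x‖) (𝓝[≠] (0 : ℝ)) (𝓝 0)) :
    ∃ δ > 0, ∀ x ∈ Set.Icc (-δ) δ, f x = 0 := by
  have hc : (0:ℝ) < 1 / (2 * n) := by positivity
  have hev : ∀ᶠ x in 𝓝[≠] (0:ℝ), ∀ k ∈ Finset.range n,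
      |x| ^ (n - k) * ‖b k x‖ ≤ 1 / (2 * n) := by
    rw [eventually_all_finset]
    intro k hk
    exact ((hcoeff k (Finset.mem_range.mp hk)).eventually_lt_const hc).mono
      fun x hx => le_of_lt hx
  rw [eventually_nhdsWithin_iff, Metric.eventually_nhds_iff] at hev
  obtain ⟨ε, hε, hev⟩ := hev
  set δ : ℝ := min (ε / 2) (a / 2) with hδdef
  have hδ : 0 < δ := by positivity
  have hsub : Set.Icc (-δ) δ ⊆ Set.Ioo (-a) a := by
    intro x hx
    have h1 : δ ≤ a / 2 := min_le_right _ _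
    exact ⟨by linarith [hx.1], by linarith [hx.2]⟩
  have hsmall : ∀ x ∈ Set.Icc (-δ) δ, x ≠ 0 → ∀ k < n,
      |x| ^ (n - k) * ‖b k x‖ ≤ 1 / (2 * n) := by
    intro x hx hx0 k hk
    have h1 : δ ≤ ε / 2 := min_le_left _ _
    have hd : dist x 0 < ε := by
      rw [Real.dist_eq, sub_zero]
      rcases abs_le.mpr ⟨hx.1, hx.2⟩ with h
      have := abs_le.mpr ⟨hx.1, hx.2⟩
      linarith [this]
    exact hev hd hx0 k (Finset.mem_range.mpr hk)
  -- maximum of ‖f⁽ⁿ⁾‖ on the compact interval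
  obtain ⟨x₀, hx₀, hmax⟩ : ∃ x₀ ∈ Set.Icc (-δ) δ,
      IsMaxOn (fun x => ‖iteratedDeriv n f x‖) (Set.Icc (-δ) δ) x₀ :=
    isCompact_Icc.exists_isMaxOn (Set.nonempty_Icc.mpr (by linarith))
      (fun x hx => ((hsmooth n x (hsub hx)).continuousAt.continuousWithinAt).norm)
  set M : ℝ := ‖iteratedDeriv n f x₀‖ with hMdef
  have hM : ∀ x ∈ Set.Icc (-δ) δ, ‖iteratedDeriv n f x‖ ≤ M := fun x hx => hmax hx
  have hMnn : 0 ≤ M := norm_nonneg _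
  have key := keyA n a δ hδ hsub f hsmooth hinit M hM
  -- bound at nonzero points
  have hhalf : ∀ x ∈ Set.Icc (-δ) δ, x ≠ 0 → ‖iteratedDeriv n f x‖ ≤ M / 2 := by
    intro x hx hx0
    have hode' := hode x (hsub hx) hx0
    have heq : iteratedDeriv n f x = -∑ k ∈ Finset.range n, b k x * iteratedDeriv k f x := by
      linear_combination hode'
    rw [heq, norm_neg]
    calc ‖∑ k ∈ Finset.range n, b k x * iteratedDeriv k f x‖
        ≤ ∑ k ∈ Finset.range n, ‖b k x * iteratedDeriv k f x‖ := norm_sum_le _ _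
      _ ≤ ∑ k ∈ Finset.range n, M * (1 / (2 * n)) := by
          apply Finset.sum_le_sum
          intro k hk
          have hkn := Finset.mem_range.mp hk
          rw [norm_mul]
          have h1 : ‖iteratedDeriv k f x‖ ≤ M * |x| ^ (n - k) :=
            key (n - k) k (by omega) x hx
          calc ‖b k x‖ * ‖iteratedDeriv k f x‖
              ≤ ‖b k x‖ * (M * |x| ^ (n - k)) :=
                mul_le_mul_of_nonneg_left h1 (norm_nonneg _)
            _ = M * (|x| ^ (n - k) * ‖b k x‖) := by ring
            _ ≤ M * (1 / (2 * n)) :=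
                mul_le_mul_of_nonneg_left (hsmall x hx hx0 k hkn) hMnn
      _ = n * (M * (1 / (2 * n))) := by rw [Finset.sum_const, Finset.card_range]; ring
      _ = M / 2 := by
          field_simp
  -- therefore M ≤ M/2
  have hM2 : M ≤ M / 2 := by
    rcases eq_or_ne x₀ 0 with h0 | h0
    · -- continuity argument at 0
      have hcont : Filter.Tendsto (fun x => ‖iteratedDeriv n f x‖) (𝓝[≠] (0:ℝ))
          (𝓝 ‖iteratedDeriv n f 0‖) :=
        ((hsmooth n 0 (hsub (by constructor <;> linarith))).continuousAt.norm.tendsto).mono_left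
          nhdsWithin_le_nhds
      have hevb : ∀ᶠ x in 𝓝[≠] (0:ℝ), ‖iteratedDeriv n f x‖ ≤ M / 2 := by
        have hmem : Set.Icc (-δ) δ ∈ 𝓝 (0:ℝ) := Icc_mem_nhds (by linarith) hδ
        filter_upwards [nhdsWithin_le_nhds hmem, self_mem_nhdsWithin] with x hx hx0
        exact hhalf x hx hx0
      have := le_of_tendsto hcont hevb
      rw [hMdef, h0]; simpa [hMdef, h0] using this
    · exact hhalf x₀ hx₀ h0
  have hM0 : M = 0 := by linarith
  refine ⟨δ, hδ, fun x hx => ?_⟩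
  have := key n 0 (by omega) x hx
  rw [hM0, zero_mul] at this
  have hf0 : ‖iteratedDeriv 0 f x‖ = 0 := le_antisymm this (norm_nonneg _)
  simpa [iteratedDeriv_zero] using norm_eq_zero.mp hf0
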